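/- Let S ⊆ M be an affine semigroup (a finitely generated submonoid of a lattice M ≅ ℤⁿ) that is saturated: for all k ∈ ℕ with k > 0 and m ∈ M, k·m ∈ S implies m ∈ S. Then S equals σ^∨ ∩ M for some rational polyhedral cone σ^∨, namely the cone generated by any finite generating set of S. -/

import Mathlib

open scoped BigOperators

noncomputable section AuxGordan

variable {n : ℕ}

/-- coordinatewise cast `ℚ^n → ℝ^n` as a `ℚ`-linear map. -/
def castRL (n : ℕ) : (Fin n → ℚ) →ₗ[ℚ] (Fin n → ℝ) :=
  LinearMap.compLeft (Algebra.linearMap ℚ ℝ) (Fin n)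

lemma castRL_apply (x : Fin n → ℚ) (j : Fin n) : castRL n x j = (x j : ℝ) := rfl

lemma castRL_inj : Function.Injective (castRL n) := by
  intro x y h
  funext j
  have : (x j : ℝ) = (y j : ℝ) := congrFun h j
  exact_mod_cast this

/-- the dot product bilinear form on `ℚ^n`. -/
def dotB (n : ℕ) : LinearMap.BilinForm ℚ (Fin n → ℚ) :=
  LinearMap.mk₂ ℚ (fun x y => ∑ j, x j * y j)
    (by intro a b y; simp [add_mul, Finset.sum_add_distrib])
    (by intro c a y; simp [Finset.mul_sum, mul_assoc])
    (by intro a b y; simp [mul_add, Finset.sum_add_distrib])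
    (by intro c a y; simp [Finset.mul_sum, mul_left_comm])

lemma dotB_apply (x y : Fin n → ℚ) : dotB n x y = ∑ j, x j * y j := rfl

end AuxGordan

section Key

variable {n : ℕ} {ι : Type} [DecidableEq ι]

lemma rat_sol_of_real_sol (n : ℕ) (v : ι → (Fin n → ℚ)) (m : Fin n → ℚ) :
    ∀ (N : ℕ) (s : Finset ι), s.card ≤ N → ∀ lam : ι → ℝ, (∀ i ∈ s, 0 ≤ lam i) →
    (∑ i ∈ s, lam i • castRL n (v i)) = castRL n m →
    ∃ q : ι → ℚ, (∀ i, 0 ≤ q i) ∧ ∑ i ∈ s, q i • v i = m := by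
  intro N
  induction N with
  | zero =>
    intro s hcard lam hlam hsum
    have hs : s = ∅ := Finset.card_eq_zero.mp (Nat.le_zero.mp hcard)
    subst hs
    simp only [Finset.sum_empty] at hsum ⊢
    refine ⟨0, fun i => le_refl 0, ?_⟩
    have hm0 : m = 0 := castRL_inj (by rw [← hsum, map_zero])
    simp [hm0]
  | succ N ih =>
    intro s hcard lam hlam hsum
    by_cases hind : LinearIndependent ℝ (fun i : {x // x ∈ s} => castRL n (v i))
    · -- independent case: rationality via orthogonal complement over ℚ
      set W : Submodule ℚ (Fin n → ℚ) :=
        Submodule.span ℚ (Set.range (fun i : {x // x ∈ s} => v i)) with hW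
      have hrefl : (dotB n).IsRefl := by
        intro x y h
        rw [dotB_apply] at h ⊢
        rw [Finset.sum_congr rfl (fun j _ => mul_comm (y j) (x j))]
        exact h
      have hnd : ((dotB n).restrict W).Nondegenerate := by
        constructor <;> intro x hx
        all_goals
          have h : ∑ j, (x : Fin n → ℚ) j * (x : Fin n → ℚ) j = 0 := hx x
          refine Subtype.ext (funext fun j => ?_)
          have hj := (Finset.sum_eq_zero_iff_of_nonneg
            (fun j _ => mul_self_nonneg ((x : Fin n → ℚ) j))).mp h j (Finset.mem_univ j)
          exact mul_self_eq_zero.mp hj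
      have hcompl := LinearMap.BilinForm.isCompl_orthogonal_of_restrict_nondegenerate hrefl hnd
      have hmem : m ∈ W ⊔ (dotB n).orthogonal W := by
        rw [hcompl.sup_eq_top]; exact Submodule.mem_top
      obtain ⟨p, hp, r, hr, hpr⟩ := Submodule.mem_sup.mp hmem
      set VR : Submodule ℝ (Fin n → ℝ) :=
        Submodule.span ℝ (Set.range (fun i : {x // x ∈ s} => castRL n (v i))) with hVR
      have hmR : castRL n m ∈ VR := by
        rw [← hsum, ← Finset.sum_coe_sort s (fun i => lam i • castRL n (v i))]
        exact Submodule.sum_mem _ (fun i _ =>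
          Submodule.smul_mem _ _ (Submodule.subset_span ⟨i, rfl⟩))
      have hpR : ∀ x ∈ W, castRL n x ∈ VR := by
        intro x hx
        induction hx using Submodule.span_induction with
        | mem y hy =>
          obtain ⟨i, rfl⟩ := hy
          exact Submodule.subset_span ⟨i, rfl⟩
        | zero => rw [map_zero]; exact Submodule.zero_mem _
        | add a b _ _ iha ihb => rw [map_add]; exact Submodule.add_mem _ iha ihb
        | smul c a _ iha =>
          rw [map_smul, ← algebraMap_smul ℝ c (castRL n a)]
          exact Submodule.smul_mem _ _ iha
      have hrR : castRL n r ∈ VR := by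
        have : castRL n r = castRL n m - castRL n p := by
          rw [← hpr, map_add]; ring
        rw [this]
        exact Submodule.sub_mem _ hmR (hpR p hp)
      have horth : ∀ x ∈ VR, (∑ j, x j * castRL n r j) = 0 := by
        intro x hx
        induction hx using Submodule.span_induction with
        | mem y hy =>
          obtain ⟨i, rfl⟩ := hy
          have h0 : dotB n (v i) r = 0 := hr _ (Submodule.subset_span ⟨i, rfl⟩)
          rw [dotB_apply] at h0
          have hcast : ((∑ j, v i j * r j : ℚ) : ℝ) = 0 := by rw [h0]; norm_num
          push_cast at hcast
          simpa [castRL_apply] using hcast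
        | zero => simp
        | add a b _ _ iha ihb =>
          simp only [Pi.add_apply, add_mul, Finset.sum_add_distrib, iha, ihb, add_zero]
        | smul c a _ iha =>
          simp only [Pi.smul_apply, smul_eq_mul, mul_assoc, ← Finset.mul_sum, iha, mul_zero]
      have hr0 : r = 0 := by
        apply castRL_inj
        rw [map_zero]
        have h0 := horth _ hrR
        funext j
        have hj := (Finset.sum_eq_zero_iff_of_nonneg
          (fun j _ => mul_self_nonneg (castRL n r j))).mp h0 j (Finset.mem_univ j)
        exact mul_self_eq_zero.mp hj
      have hmW : m ∈ W := by
        rw [← hpr, hr0, add_zero]; exact hp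
      obtain ⟨qs, hqs⟩ := (Submodule.mem_span_range_iff_exists_fun ℚ).mp hmW
      have hcast : ∑ i : {x // x ∈ s}, ((qs i : ℝ)) • castRL n (v i) = castRL n m := by
        funext j
        have hqj := congrFun hqs j
        simp only [Finset.sum_apply, Pi.smul_apply, smul_eq_mul] at hqj ⊢
        simp only [castRL_apply]
        exact_mod_cast hqj
      have hsum' : ∑ i : {x // x ∈ s}, lam i • castRL n (v i) = castRL n m := by
        rw [Finset.sum_coe_sort s (fun i => lam i • castRL n (v i))]; exact hsum
      have hdiff : ∑ i : {x // x ∈ s}, ((qs i : ℝ) - lam i) • castRL n (v i) = 0 := by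
        simp only [sub_smul, Finset.sum_sub_distrib, hcast, hsum', sub_self]
      have hz := Fintype.linearIndependent_iff.mp hind _ hdiff
      refine ⟨fun i => if h : i ∈ s then qs ⟨i, h⟩ else 0, ?_, ?_⟩
      · intro i
        by_cases h : i ∈ s
        · simp only [dif_pos h]
          have h1 : ((qs ⟨i, h⟩ : ℝ)) = lam i := by
            have := hz ⟨i, h⟩
            have := sub_eq_zero.mp this
            exact this
          have : (0:ℝ) ≤ ((qs ⟨i, h⟩ : ℝ)) := h1 ▸ hlam i h
          exact_mod_cast this
        · simp [dif_neg h]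
      · rw [← Finset.sum_coe_sort s (fun i => (if h : i ∈ s then qs ⟨i, h⟩ else 0) • v i), ← hqs]
        refine Finset.sum_congr rfl fun i _ => ?_
        rw [dif_pos i.2, Subtype.coe_eta]
    · -- dependent case: reduce the support
      obtain ⟨g, hg0, i1, hgi1⟩ :
          ∃ g : {x // x ∈ s} → ℝ, (∑ i, g i • castRL n (v i)) = 0 ∧ ∃ i, 0 < g i := by
        obtain ⟨g, hg0, i0, hgi0⟩ := Fintype.not_linearIndependent_iff.mp hind
        rcases lt_or_gt_of_ne hgi0 with h | h
        · refine ⟨-g, ?_, i0, by simpa using h⟩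
          simp only [Pi.neg_apply, neg_smul, Finset.sum_neg_distrib, hg0, neg_zero]
        · exact ⟨g, hg0, i0, h⟩
      set cg : ι → ℝ := fun i => if h : i ∈ s then g ⟨i, h⟩ else 0 with hcg
      have hcgval : ∀ i : {x // x ∈ s}, cg ↑i = g i := by
        intro i
        simp only [hcg, dif_pos i.2, Subtype.coe_eta]
      have hcgsum : ∑ i ∈ s, cg i • castRL n (v i) = 0 := by
        rw [← Finset.sum_coe_sort s (fun i => cg i • castRL n (v i)), ← hg0]
        exact Finset.sum_congr rfl fun i _ => by rw [hcgval i]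
      set T : Finset ι := s.filter (fun i => 0 < cg i) with hT
      have hTne : T.Nonempty := ⟨i1, Finset.mem_filter.mpr ⟨i1.2, by rw [hcgval i1]; exact hgi1⟩⟩
      obtain ⟨i₁, hi₁T, hmin⟩ := Finset.exists_min_image T (fun i => lam i / cg i) hTne
      have hi₁s : i₁ ∈ s := (Finset.mem_filter.mp hi₁T).1
      have hcgi₁ : 0 < cg i₁ := (Finset.mem_filter.mp hi₁T).2
      set t : ℝ := lam i₁ / cg i₁ with ht
      have ht0 : 0 ≤ t := div_nonneg (hlam i₁ hi₁s) hcgi₁.le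
      set lam' : ι → ℝ := fun i => lam i - t * cg i with hlam'def
      have hlam'0 : ∀ i ∈ s, 0 ≤ lam' i := by
        intro i hi
        simp only [hlam'def]
        rcases le_or_gt (cg i) 0 with h | h
        · have h2 : t * cg i ≤ 0 := mul_nonpos_of_nonneg_of_nonpos ht0 h
          have := hlam i hi
          linarith
        · have hiT : i ∈ T := Finset.mem_filter.mpr ⟨hi, h⟩
          have h3 := hmin i hiT
          have h4 : lam i₁ * cg i ≤ lam i * cg i₁ := (div_le_div_iff₀ hcgi₁ h).mp h3
          rw [sub_nonneg, ht, div_mul_eq_mul_div, div_le_iff₀ hcgi₁]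
          linarith
      have hlam'i₁ : lam' i₁ = 0 := by
        simp only [hlam'def, ht]
        rw [div_mul_cancel₀ _ (ne_of_gt hcgi₁), sub_self]
      have hsum' : ∑ i ∈ s.erase i₁, lam' i • castRL n (v i) = castRL n m := by
        rw [Finset.sum_erase s (by rw [hlam'i₁, zero_smul])]
        have hexp : ∑ i ∈ s, lam' i • castRL n (v i) =
            (∑ i ∈ s, lam i • castRL n (v i)) - t • (∑ i ∈ s, cg i • castRL n (v i)) := by
          rw [Finset.smul_sum, ← Finset.sum_sub_distrib]
          refine Finset.sum_congr rfl fun i _ => ?_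
          simp only [hlam'def]
          rw [sub_smul, smul_smul]
        rw [hexp, hcgsum, smul_zero, sub_zero, hsum]
      have hcard' : (s.erase i₁).card ≤ N := by
        have := Finset.card_erase_of_mem hi₁s
        omega
      obtain ⟨q, hq0, hq⟩ := ih (s.erase i₁) hcard' lam'
        (fun i hi => hlam'0 i (Finset.mem_of_mem_erase hi)) hsum'
      refine ⟨fun i => if i = i₁ then 0 else q i,
        fun i => by by_cases h : i = i₁ <;> simp [h, hq0 i], ?_⟩
      rw [← Finset.insert_erase hi₁s, Finset.sum_insert (Finset.notMem_erase i₁ s)]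
      have hz0 : (fun i => if i = i₁ then (0:ℚ) else q i) i₁ = 0 := if_pos rfl
      rw [hz0, zero_smul, zero_add, ← hq]
      exact Finset.sum_congr rfl fun i hi => by simp [Finset.ne_of_mem_erase hi]

end Key

theorem saturated_semigroup_eq_cone_points (n : ℕ) (A : Finset (Fin n → ℤ))
    (hsat : ∀ k : ℕ, 0 < k → ∀ m : Fin n → ℤ,
      k • m ∈ AddSubmonoid.closure (↑A : Set (Fin n → ℤ)) →
      m ∈ AddSubmonoid.closure (↑A : Set (Fin n → ℤ))) :
    (AddSubmonoid.closure (↑A : Set (Fin n → ℤ)) : Set (Fin n → ℤ)) =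
      {m | ∃ lam : (Fin n → ℤ) → ℝ, (∀ u, 0 ≤ lam u) ∧
        (fun i => (m i : ℝ)) = ∑ u ∈ A, lam u • (fun i => (u i : ℝ))} := by
  ext m
  constructor
  · intro hm
    induction hm using AddSubmonoid.closure_induction with
    | mem x hx =>
      refine ⟨fun u => if u = x then 1 else 0, fun u => by positivity, ?_⟩
      funext i
      simp only [Finset.sum_apply, Pi.smul_apply, smul_eq_mul, ite_mul, one_mul, zero_mul]
      rw [Finset.sum_ite_eq' A x (fun u => ((u i : ℝ)))]
      simp only [Finset.mem_coe] at hx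
      rw [if_pos hx]
    | zero =>
      exact ⟨0, fun u => le_refl 0, by funext i; simp⟩
    | add x y hx hy ihx ihy =>
      obtain ⟨l1, hl1, he1⟩ := ihx
      obtain ⟨l2, hl2, he2⟩ := ihy
      refine ⟨l1 + l2, fun u => add_nonneg (hl1 u) (hl2 u), ?_⟩
      funext i
      have h1 := congrFun he1 i
      have h2 := congrFun he2 i
      simp only [Finset.sum_apply, Pi.smul_apply, smul_eq_mul, Pi.add_apply] at h1 h2 ⊢
      push_cast
      rw [h1, h2, ← Finset.sum_add_distrib]
      exact Finset.sum_congr rfl fun u _ => (add_mul _ _ _).symm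
  · rintro ⟨lam, hlam, heq⟩
    have hsum : (∑ u ∈ A, lam u • castRL n (fun j => ((u j : ℚ)))) =
        castRL n (fun j => ((m j : ℚ))) := by
      funext j
      have h := congrFun heq j
      simp only [Finset.sum_apply, Pi.smul_apply, smul_eq_mul] at h ⊢
      simp only [castRL_apply, Rat.cast_intCast]
      exact h.symm
    obtain ⟨q, hq0, hq⟩ := rat_sol_of_real_sol n (fun u j => ((u j : ℚ)))
      (fun j => ((m j : ℚ))) A.card A le_rfl lam (fun i _ => hlam i) hsum
    set d : ℕ := ∏ u ∈ A, (q u).den with hd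
    have hdpos : 0 < d := Finset.prod_pos (fun u _ => (q u).pos)
    have hint : ∀ u ∈ A, (((q u * (d:ℚ)).num : ℚ)) = q u * d := by
      intro u hu
      have hdvd : (q u).den ∣ d := Finset.dvd_prod_of_mem _ hu
      have hcast : ((d : ℚ)) = ((q u).den : ℚ) * ((d / (q u).den : ℕ) : ℚ) := by
        rw [← Nat.cast_mul, Nat.mul_div_cancel' hdvd]
      have : q u * (d:ℚ) = (((q u).num * ((d / (q u).den : ℕ) : ℤ) : ℤ) : ℚ) := by
        rw [hcast, ← mul_assoc, Rat.mul_den_eq_num, Int.cast_mul, Int.cast_natCast]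
      rw [this, Rat.num_intCast]
    have hnum0 : ∀ u ∈ A, 0 ≤ (q u * (d:ℚ)).num := by
      intro u hu
      exact Rat.num_nonneg.2 (mul_nonneg (hq0 u) (by positivity))
    set c : (Fin n → ℤ) → ℕ := fun u => (q u * (d:ℚ)).num.toNat with hc
    have hdm : d • m = ∑ u ∈ A, c u • u := by
      funext j
      have hqj := congrFun hq j
      simp only [Finset.sum_apply, Pi.smul_apply, smul_eq_mul] at hqj
      have key : (d:ℚ) * ((m j : ℚ)) = ∑ x ∈ A, ((c x : ℚ)) * ((x j : ℚ)) := by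
        rw [← hqj, Finset.mul_sum]
        refine Finset.sum_congr rfl fun u hu => ?_
        have h1 : ((c u : ℚ)) = q u * d := by
          simp only [hc]
          rw [← Int.cast_natCast (R := ℚ), Int.toNat_of_nonneg (hnum0 u hu)]
          exact hint u hu
        rw [h1]
        ring
      simp only [Pi.smul_apply, Finset.sum_apply, nsmul_eq_mul]
      exact_mod_cast key
    refine hsat d hdpos m ?_
    rw [hdm]
    exact AddSubmonoid.sum_mem _ (fun u hu =>
      AddSubmonoid.nsmul_mem _ (AddSubmonoid.subset_closure hu) (c u))
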